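/- Let R be a commutative ring and M a free R-module of rank at most 3. Then any two derivations D, D' of the exterior algebra Λ(M) which each raise exterior degree by 2 commute: D ∘ D' = D' ∘ D. -/

import Mathlib

/-- Over the exterior algebra of a free module of rank at most 3, any two
derivations raising exterior degree by 2 commute. -/
theorem stmt5 {R M : Type*} [CommRing R] [AddCommGroup M] [Module R M]
    {n : ℕ} (hn : n ≤ 3) (b : Module.Basis (Fin n) R M)
    (D D' : ExteriorAlgebra R M →ₗ[R] ExteriorAlgebra R M)
    (hD : ∀ x y, D (x * y) = D x * y + x * D y)
    (hD' : ∀ x y, D' (x * y) = D' x * y + x * D' y)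
    (hDdeg : ∀ r : ℕ,
      ∀ x ∈ (LinearMap.range (ExteriorAlgebra.ι R (M := M))) ^ r,
        D x ∈ (LinearMap.range (ExteriorAlgebra.ι R (M := M))) ^ (r + 2))
    (hD'deg : ∀ r : ℕ,
      ∀ x ∈ (LinearMap.range (ExteriorAlgebra.ι R (M := M))) ^ r,
        D' x ∈ (LinearMap.range (ExteriorAlgebra.ι R (M := M))) ^ (r + 2)) :
    ∀ x, D (D' x) = D' (D x) := by
  -- The 5th exterior power vanishes since rank ≤ 3.
  have hMulti : ExteriorAlgebra.ιMulti R 5 (M := M) = 0 := by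
    refine b.ext_alternating fun v hv => ?_
    have hcard := Fintype.card_le_of_injective v hv
    rw [Fintype.card_fin, Fintype.card_fin] at hcard
    omega
  have hbot : (LinearMap.range (ExteriorAlgebra.ι R (M := M))) ^ 5 = ⊥ := by
    have := ExteriorAlgebra.ιMulti_span_fixedDegree R (M := M) 5
    rw [hMulti] at this
    rw [show (⇑(0 : M [⋀^Fin 5]→ₗ[R] ExteriorAlgebra R M)) = (fun _ => 0) from rfl,
      Set.range_const, Submodule.span_singleton_eq_bot.mpr rfl] at this
    exact this.symm
  -- Derivations kill 1.
  have h1 : D 1 = 0 := by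
    have h := hD 1 1
    simp only [mul_one, one_mul] at h
    nth_rewrite 1 [← add_zero (D 1)] at h
    exact (add_left_cancel h).symm
  have h1' : D' 1 = 0 := by
    have h := hD' 1 1
    simp only [mul_one, one_mul] at h
    nth_rewrite 1 [← add_zero (D' 1)] at h
    exact (add_left_cancel h).symm
  intro x
  induction x using ExteriorAlgebra.induction with
  | algebraMap r =>
    simp [Algebra.algebraMap_eq_smul_one, h1, h1']
  | ι m =>
    have hm : ExteriorAlgebra.ι R m ∈ (LinearMap.range (ExteriorAlgebra.ι R (M := M))) ^ 1 := by
      rw [pow_one]; exact LinearMap.mem_range_self _ _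
    have h3 : D' (D (ExteriorAlgebra.ι R m)) ∈
        (LinearMap.range (ExteriorAlgebra.ι R (M := M))) ^ 5 :=
      hD'deg 3 _ (hDdeg 1 _ hm)
    have h3' : D (D' (ExteriorAlgebra.ι R m)) ∈
        (LinearMap.range (ExteriorAlgebra.ι R (M := M))) ^ 5 :=
      hDdeg 3 _ (hD'deg 1 _ hm)
    rw [hbot, Submodule.mem_bot] at h3 h3'
    rw [h3, h3']
  | mul x y hx hy =>
    rw [hD', map_add, hD, hD, hD, map_add, hD', hD', hx, hy]
    abel
  | add x y hx hy =>
    rw [map_add, map_add, hx, hy, map_add, map_add]
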